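/- For every α ∈ (0,1), there exist β₁ ≠ β₂ ∈ [0,1] and β₁′ ≠ β₂′ ∈ [0,1] with (β₁+β₂)/2 = (β₁′+β₂′)/2 = α such that the following three properties hold: (i) the uniform mixture (1/2)·P_{α,β₁} + (1/2)·P_{α,β₂} equals the pushforward under (y, b_c, b_s) ↦ (y, b_s, b_c) of the uniform mixture (1/2)·P_{β₁′,α} + (1/2)·P_{β₂′,α}; (ii) in the first pair of environments, the conditional probability P(Y = b | B_c = b) is the same for both environments while P(Y = b | B_s = b) differs between them; (iii) in the second pair of environments, the conditional probability P(Y = b | B_s = b) is the same for both environments while P(Y = b | B_c = b) differs between them. Thus there exist two families of training environments sharing the same pooled joint distribution but with opposite invariant coordinates. -/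

import Mathlib

open MeasureTheory
open scoped ENNReal

/-- The Rademacher-type measure `Rad(γ)` on `ℤ`, putting mass `γ` on `-1` and `1-γ` on `1`. -/
noncomputable def radMeas (γ : ℝ) : Measure ℤ :=
  ENNReal.ofReal γ • Measure.dirac (-1) + ENNReal.ofReal (1 - γ) • Measure.dirac 1

/-- The two-piece environment `P_{α,β}`: the joint law of `(Y, Y·R_c, Y·R_s)` where
`Y ~ Rad(1/2)` (uniform on `{-1,1}`), `R_c ~ Rad(α)`, `R_s ~ Rad(β)`, mutually independent. -/
noncomputable def twoPiece (α β : ℝ) : Measure (ℤ × ℤ × ℤ) :=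
  Measure.map (fun t : ℤ × ℤ × ℤ => (t.1, t.1 * t.2.1, t.1 * t.2.2))
    ((radMeas (1 / 2)).prod ((radMeas α).prod (radMeas β)))

set_option maxHeartbeats 1000000

instance radMeas_finite (γ : ℝ) : IsFiniteMeasure (radMeas γ) := by
  constructor
  simp [radMeas]

lemma prod_smul_left {α β : Type*} [MeasurableSpace α] [MeasurableSpace β]
    (c : ℝ≥0∞) (μ : Measure α) [SFinite μ] (ν : Measure β) [SFinite ν] :
    (c • μ).prod ν = c • (μ.prod ν) := by
  ext s hs
  rw [Measure.prod_apply hs, Measure.smul_apply, Measure.prod_apply hs,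
    lintegral_smul_measure]

lemma prod_smul_right {α β : Type*} [MeasurableSpace α] [MeasurableSpace β]
    (c : ℝ≥0∞) (μ : Measure α) [SFinite μ] (ν : Measure β) [SFinite ν] :
    μ.prod (c • ν) = c • (μ.prod ν) := by
  ext s hs
  rw [Measure.prod_apply hs, Measure.smul_apply, Measure.prod_apply hs,
  smul_eq_mul, ← lintegral_const_mul _ (measurable_measure_prodMk_left hs)]
  simp [Measure.smul_apply]


lemma radMeas_prod (γ δ : ℝ) :
    (radMeas γ).prod (radMeas δ) =
      (ENNReal.ofReal γ * ENNReal.ofReal δ) • Measure.dirac ((-1:ℤ),(-1:ℤ))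
    + (ENNReal.ofReal γ * ENNReal.ofReal (1-δ)) • Measure.dirac ((-1:ℤ),(1:ℤ))
    + (ENNReal.ofReal (1-γ) * ENNReal.ofReal δ) • Measure.dirac ((1:ℤ),(-1:ℤ))
    + (ENNReal.ofReal (1-γ) * ENNReal.ofReal (1-δ)) • Measure.dirac ((1:ℤ),(1:ℤ)) := by
  rw [radMeas, radMeas]
  simp only [Measure.prod_add, Measure.add_prod, prod_smul_left, prod_smul_right,
    Measure.dirac_prod_dirac, smul_add, smul_smul]
  simp only [mul_comm, mul_left_comm, mul_assoc]
  abel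

lemma triple_prod (γ δ : ℝ) :
    (radMeas (1/2)).prod ((radMeas γ).prod (radMeas δ)) =
      (ENNReal.ofReal (1/2) * (ENNReal.ofReal γ * ENNReal.ofReal δ)) • Measure.dirac ((-1:ℤ),(-1:ℤ),(-1:ℤ))
    + (ENNReal.ofReal (1/2) * (ENNReal.ofReal γ * ENNReal.ofReal (1-δ))) • Measure.dirac ((-1:ℤ),(-1:ℤ),(1:ℤ))
    + (ENNReal.ofReal (1/2) * (ENNReal.ofReal (1-γ) * ENNReal.ofReal δ)) • Measure.dirac ((-1:ℤ),(1:ℤ),(-1:ℤ))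
    + (ENNReal.ofReal (1/2) * (ENNReal.ofReal (1-γ) * ENNReal.ofReal (1-δ))) • Measure.dirac ((-1:ℤ),(1:ℤ),(1:ℤ))
    + (ENNReal.ofReal (1-1/2) * (ENNReal.ofReal γ * ENNReal.ofReal δ)) • Measure.dirac ((1:ℤ),(-1:ℤ),(-1:ℤ))
    + (ENNReal.ofReal (1-1/2) * (ENNReal.ofReal γ * ENNReal.ofReal (1-δ))) • Measure.dirac ((1:ℤ),(-1:ℤ),(1:ℤ))
    + (ENNReal.ofReal (1-1/2) * (ENNReal.ofReal (1-γ) * ENNReal.ofReal δ)) • Measure.dirac ((1:ℤ),(1:ℤ),(-1:ℤ))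
    + (ENNReal.ofReal (1-1/2) * (ENNReal.ofReal (1-γ) * ENNReal.ofReal (1-δ))) • Measure.dirac ((1:ℤ),(1:ℤ),(1:ℤ)) := by
  rw [radMeas_prod, radMeas]
  simp only [Measure.prod_add, Measure.add_prod, prod_smul_left, prod_smul_right,
    Measure.dirac_prod_dirac, smul_add, smul_smul]
  simp only [mul_comm, mul_left_comm, mul_assoc]
  abel

lemma twoPiece_eq (γ δ : ℝ) :
    twoPiece γ δ =
      (ENNReal.ofReal (1/2) * (ENNReal.ofReal γ * ENNReal.ofReal δ)) • Measure.dirac ((-1:ℤ),(1:ℤ),(1:ℤ))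
    + (ENNReal.ofReal (1/2) * (ENNReal.ofReal γ * ENNReal.ofReal (1-δ))) • Measure.dirac ((-1:ℤ),(1:ℤ),(-1:ℤ))
    + (ENNReal.ofReal (1/2) * (ENNReal.ofReal (1-γ) * ENNReal.ofReal δ)) • Measure.dirac ((-1:ℤ),(-1:ℤ),(1:ℤ))
    + (ENNReal.ofReal (1/2) * (ENNReal.ofReal (1-γ) * ENNReal.ofReal (1-δ))) • Measure.dirac ((-1:ℤ),(-1:ℤ),(-1:ℤ))
    + (ENNReal.ofReal (1-1/2) * (ENNReal.ofReal γ * ENNReal.ofReal δ)) • Measure.dirac ((1:ℤ),(-1:ℤ),(-1:ℤ))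
    + (ENNReal.ofReal (1-1/2) * (ENNReal.ofReal γ * ENNReal.ofReal (1-δ))) • Measure.dirac ((1:ℤ),(-1:ℤ),(1:ℤ))
    + (ENNReal.ofReal (1-1/2) * (ENNReal.ofReal (1-γ) * ENNReal.ofReal δ)) • Measure.dirac ((1:ℤ),(1:ℤ),(-1:ℤ))
    + (ENNReal.ofReal (1-1/2) * (ENNReal.ofReal (1-γ) * ENNReal.ofReal (1-δ))) • Measure.dirac ((1:ℤ),(1:ℤ),(1:ℤ)) := by
  rw [twoPiece, triple_prod]
  simp only [Measure.map_add _ _ Measurable.of_discrete, Measure.map_smul,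
    Measure.map_dirac' Measurable.of_discrete]
  norm_num

lemma twoPiece_swap (γ δ : ℝ) :
    Measure.map (fun t : ℤ × ℤ × ℤ => (t.1, t.2.2, t.2.1)) (twoPiece δ γ) = twoPiece γ δ := by
  rw [twoPiece_eq δ γ, twoPiece_eq γ δ]
  simp only [Measure.map_add _ _ Measurable.of_discrete, Measure.map_smul,
    Measure.map_dirac' Measurable.of_discrete]
  simp only [mul_comm, mul_left_comm, mul_assoc]
  abel


lemma ofReal_split (x : ℝ) (h0 : 0 ≤ x) (h1 : x ≤ 1) :
    ENNReal.ofReal x + ENNReal.ofReal (1 - x) = 1 := by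
  rw [← ENNReal.ofReal_add h0 (by linarith)]
  norm_num

lemma ofReal_half_eq : ENNReal.ofReal (2⁻¹ : ℝ) = (2 : ℝ≥0∞)⁻¹ := by
  rw [ENNReal.ofReal_inv_of_pos (by norm_num)]
  norm_num

lemma aux1 (A B C D : ℝ≥0∞) (hAB : A + B = 1) (hCD : C + D = 1) :
    (ENNReal.ofReal 2⁻¹ * (A * C) + ENNReal.ofReal 2⁻¹ * (A * D) +
     ENNReal.ofReal 2⁻¹ * (B * C) + ENNReal.ofReal 2⁻¹ * (B * D))⁻¹ *
    (ENNReal.ofReal 2⁻¹ * (A * C) + ENNReal.ofReal 2⁻¹ * (A * D)) = A := by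
  rw [ofReal_half_eq]
  have e1 : (2 : ℝ≥0∞)⁻¹ * (A * C) + 2⁻¹ * (A * D) + 2⁻¹ * (B * C) + 2⁻¹ * (B * D)
      = 2⁻¹ * ((A + B) * (C + D)) := by ring
  have e2 : (2 : ℝ≥0∞)⁻¹ * (A * C) + 2⁻¹ * (A * D) = 2⁻¹ * (A * (C + D)) := by ring
  rw [e1, e2, hAB, hCD, one_mul, mul_one, inv_inv, ← mul_assoc,
    ENNReal.mul_inv_cancel two_ne_zero ENNReal.ofNat_ne_top, one_mul, mul_one]

lemma aux2 (A B C D : ℝ≥0∞) (hAB : A + B = 1) (hCD : C + D = 1) :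
    (ENNReal.ofReal 2⁻¹ * (B * C) + ENNReal.ofReal 2⁻¹ * (B * D) +
     ENNReal.ofReal 2⁻¹ * (A * C) + ENNReal.ofReal 2⁻¹ * (A * D))⁻¹ *
    (ENNReal.ofReal 2⁻¹ * (A * C) + ENNReal.ofReal 2⁻¹ * (A * D)) = A := by
  rw [show ENNReal.ofReal 2⁻¹ * (B * C) + ENNReal.ofReal 2⁻¹ * (B * D) +
     ENNReal.ofReal 2⁻¹ * (A * C) + ENNReal.ofReal 2⁻¹ * (A * D)
     = ENNReal.ofReal 2⁻¹ * (A * C) + ENNReal.ofReal 2⁻¹ * (A * D) +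
     ENNReal.ofReal 2⁻¹ * (B * C) + ENNReal.ofReal 2⁻¹ * (B * D) by ring]
  exact aux1 A B C D hAB hCD

lemma cond_c (γ δ : ℝ) (h0γ : 0 ≤ γ) (h1γ : γ ≤ 1) (h0δ : 0 ≤ δ) (h1δ : δ ≤ 1)
    (b : ℤ) (hb : b = -1 ∨ b = 1) :
    ProbabilityTheory.cond (twoPiece γ δ) {t : ℤ × ℤ × ℤ | t.2.1 = b} {t : ℤ × ℤ × ℤ | t.1 = b}
      = ENNReal.ofReal (1 - γ) := by
  rw [ProbabilityTheory.cond_apply MeasurableSet.of_discrete, twoPiece_eq]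
  have hAB : ENNReal.ofReal (1 - γ) + ENNReal.ofReal γ = 1 := by
    rw [add_comm]; exact ofReal_split γ h0γ h1γ
  have hCD : ENNReal.ofReal δ + ENNReal.ofReal (1 - δ) = 1 := ofReal_split δ h0δ h1δ
  rcases hb with rfl | rfl
  · simp [Measure.dirac_apply, Set.indicator_apply, Set.mem_setOf_eq]
    rw [show ENNReal.ofReal ((1:ℝ) - 2⁻¹) = ENNReal.ofReal 2⁻¹ by norm_num]
    rw [← ofReal_half_eq]
    exact aux1 _ _ _ _ hAB hCD
  · simp [Measure.dirac_apply, Set.indicator_apply, Set.mem_setOf_eq]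
    rw [show ENNReal.ofReal ((1:ℝ) - 2⁻¹) = ENNReal.ofReal 2⁻¹ by norm_num]
    rw [← ofReal_half_eq]
    exact aux2 _ _ _ _ hAB hCD

lemma cond_s (γ δ : ℝ) (h0γ : 0 ≤ γ) (h1γ : γ ≤ 1) (h0δ : 0 ≤ δ) (h1δ : δ ≤ 1)
    (b : ℤ) (hb : b = -1 ∨ b = 1) :
    ProbabilityTheory.cond (twoPiece γ δ) {t : ℤ × ℤ × ℤ | t.2.2 = b} {t : ℤ × ℤ × ℤ | t.1 = b}
      = ENNReal.ofReal (1 - δ) := by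
  rw [ProbabilityTheory.cond_apply MeasurableSet.of_discrete, twoPiece_eq]
  rcases hb with rfl | rfl
  · simp [Measure.dirac_apply, Set.indicator_apply, Set.mem_setOf_eq]
    rw [show ENNReal.ofReal ((1:ℝ) - 2⁻¹) = ENNReal.ofReal 2⁻¹ by norm_num]
    rw [← ofReal_half_eq]
    convert aux1 (ENNReal.ofReal (1 - δ)) (ENNReal.ofReal δ) (ENNReal.ofReal γ)
      (ENNReal.ofReal (1 - γ))
      (by rw [add_comm]; exact ofReal_split δ h0δ h1δ)
      (ofReal_split γ h0γ h1γ) using 2 <;> ring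
  · simp [Measure.dirac_apply, Set.indicator_apply, Set.mem_setOf_eq]
    rw [show ENNReal.ofReal ((1:ℝ) - 2⁻¹) = ENNReal.ofReal 2⁻¹ by norm_num]
    rw [← ofReal_half_eq]
    convert aux1 (ENNReal.ofReal (1 - δ)) (ENNReal.ofReal δ) (ENNReal.ofReal γ)
      (ENNReal.ofReal (1 - γ))
      (by rw [add_comm]; exact ofReal_split δ h0δ h1δ)
      (ofReal_split γ h0γ h1γ) using 2 <;> ring

/-- for every `α ∈ (0,1)` there are two families of training environments,
with distinct spurious parameters averaging to `α`, whose pooled joint distributions agree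
up to the coordinate swap, while the roles of the invariant and spurious coordinates
(as witnessed by which conditional probabilities stay constant across the pair of
environments) are opposite. -/
theorem twoPiece_no_free_lunch (α : ℝ) (hα : α ∈ Set.Ioo (0 : ℝ) 1) :
    ∃ β₁ β₂ β₁' β₂' : ℝ,
      β₁ ∈ Set.Icc (0 : ℝ) 1 ∧ β₂ ∈ Set.Icc (0 : ℝ) 1 ∧ β₁ ≠ β₂ ∧
      β₁' ∈ Set.Icc (0 : ℝ) 1 ∧ β₂' ∈ Set.Icc (0 : ℝ) 1 ∧ β₁' ≠ β₂' ∧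
      (β₁ + β₂) / 2 = α ∧ (β₁' + β₂') / 2 = α ∧
      ((2 : ℝ≥0∞)⁻¹ • twoPiece α β₁ + (2 : ℝ≥0∞)⁻¹ • twoPiece α β₂ =
        Measure.map (fun t : ℤ × ℤ × ℤ => (t.1, t.2.2, t.2.1))
          ((2 : ℝ≥0∞)⁻¹ • twoPiece β₁' α + (2 : ℝ≥0∞)⁻¹ • twoPiece β₂' α)) ∧
      (∀ b : ℤ, b = -1 ∨ b = 1 →
        ProbabilityTheory.cond (twoPiece α β₁) {t : ℤ × ℤ × ℤ | t.2.1 = b}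
            {t : ℤ × ℤ × ℤ | t.1 = b} =
          ProbabilityTheory.cond (twoPiece α β₂) {t : ℤ × ℤ × ℤ | t.2.1 = b}
            {t : ℤ × ℤ × ℤ | t.1 = b} ∧
        ProbabilityTheory.cond (twoPiece α β₁) {t : ℤ × ℤ × ℤ | t.2.2 = b}
            {t : ℤ × ℤ × ℤ | t.1 = b} ≠
          ProbabilityTheory.cond (twoPiece α β₂) {t : ℤ × ℤ × ℤ | t.2.2 = b}
            {t : ℤ × ℤ × ℤ | t.1 = b}) ∧
      (∀ b : ℤ, b = -1 ∨ b = 1 →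
        ProbabilityTheory.cond (twoPiece β₁' α) {t : ℤ × ℤ × ℤ | t.2.2 = b}
            {t : ℤ × ℤ × ℤ | t.1 = b} =
          ProbabilityTheory.cond (twoPiece β₂' α) {t : ℤ × ℤ × ℤ | t.2.2 = b}
            {t : ℤ × ℤ × ℤ | t.1 = b} ∧
        ProbabilityTheory.cond (twoPiece β₁' α) {t : ℤ × ℤ × ℤ | t.2.1 = b}
            {t : ℤ × ℤ × ℤ | t.1 = b} ≠
          ProbabilityTheory.cond (twoPiece β₂' α) {t : ℤ × ℤ × ℤ | t.2.1 = b}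
            {t : ℤ × ℤ × ℤ | t.1 = b}) := by
  obtain ⟨hα0, hα1⟩ := hα
  set ε := min α (1 - α) / 2 with hε
  have h1 : min α (1 - α) ≤ α := min_le_left _ _
  have h2 : min α (1 - α) ≤ 1 - α := min_le_right _ _
  have h3 : 0 < min α (1 - α) := lt_min hα0 (by linarith)
  have hεpos : 0 < ε := by positivity
  refine ⟨α - ε, α + ε, α - ε, α + ε, ⟨by simp [hε]; linarith, by simp [hε]; linarith⟩,
    ⟨by simp [hε]; linarith, by simp [hε]; linarith⟩, by intro h; linarith,
    ⟨by simp [hε]; linarith, by simp [hε]; linarith⟩,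
    ⟨by simp [hε]; linarith, by simp [hε]; linarith⟩, by intro h; linarith,
    by ring, by ring, ?_, ?_, ?_⟩
  · rw [Measure.map_add _ _ Measurable.of_discrete, Measure.map_smul, Measure.map_smul,
      twoPiece_swap, twoPiece_swap]
  · intro b hb
    have hb1l : (0:ℝ) ≤ α - ε := by simp [hε]; linarith
    have hb1r : α - ε ≤ 1 := by simp [hε]; linarith
    have hb2l : (0:ℝ) ≤ α + ε := by positivity
    have hb2r : α + ε ≤ 1 := by simp [hε]; linarith
    refine ⟨?_, ?_⟩
    · rw [cond_c α (α - ε) hα0.le hα1.le hb1l hb1r b hb,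
        cond_c α (α + ε) hα0.le hα1.le hb2l hb2r b hb]
    · rw [cond_s α (α - ε) hα0.le hα1.le hb1l hb1r b hb,
        cond_s α (α + ε) hα0.le hα1.le hb2l hb2r b hb]
      intro h
      rw [ENNReal.ofReal_eq_ofReal_iff (by linarith) (by linarith)] at h
      linarith
  · intro b hb
    have hb1l : (0:ℝ) ≤ α - ε := by simp [hε]; linarith
    have hb1r : α - ε ≤ 1 := by simp [hε]; linarith
    have hb2l : (0:ℝ) ≤ α + ε := by positivity
    have hb2r : α + ε ≤ 1 := by simp [hε]; linarith
    refine ⟨?_, ?_⟩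
    · rw [cond_s (α - ε) α hb1l hb1r hα0.le hα1.le b hb,
        cond_s (α + ε) α hb2l hb2r hα0.le hα1.le b hb]
    · rw [cond_c (α - ε) α hb1l hb1r hα0.le hα1.le b hb,
        cond_c (α + ε) α hb2l hb2r hα0.le hα1.le b hb]
      intro h
      rw [ENNReal.ofReal_eq_ofReal_iff (by linarith) (by linarith)] at h
      linarith
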